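/- arXiv:2311.18143 — 5 statements merged into one kernel-verified Lean document; each statement's English description precedes it below -/
import Mathlib

section
/- Let M ∈ ℂ^{X×X} and H ∈ ℂ^{K×K} be normal matrices with spectral decompositions M = Σ_i θ_i E_i and H = Σ_{j=1}^{|K|} ρ_j F_j, suppose K is H-cospectral in M, and suppose H has |K| distinct eigenvalues, with v_j a fixed eigenvector spanning im F_j. Define b_{i,j} = dim{ E_i v̂ : v ∈ im F_j } and P_j(t) = Π_i (t − θ_i)^{b_{i,j}}. Then for each 1 ≤ j ≤ |K|, P_j(t) equals the minimal polynomial of M relative to v̂_j, i.e., the monic polynomial p of smallest degree satisfying p(M) v̂_j = 0. -/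
open Matrix Set

variable {X : Type*}

/-- The standard Hermitian inner product `⟨v,w⟩ = v* w`. -/
noncomputable def hermInner {n : Type*} [Fintype n] (v w : n → ℂ) : ℂ :=
  ∑ x, star (v x) * w x

/-- Restriction of a vector on `X` to the coordinates in `K`. -/
def restr (K : Set X) (ψ : X → ℂ) : K → ℂ := fun k => ψ k

/-- Extension of a vector on `K` by zeros to all of `X`. -/
def extz (K : Set X) [DecidablePred (· ∈ K)] (v : K → ℂ) : X → ℂ :=
  fun x => if h : x ∈ K then v ⟨x, h⟩ else 0

/-- The `K × K` submatrix of a matrix indexed by `X`. -/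
def subK (K : Set X) (A : Matrix X X ℂ) : Matrix K K ℂ :=
  A.submatrix (fun k : K => (k : X)) (fun k : K => (k : X))

/-- `K` is `H`-cospectral in `M`: `M` has an orthonormal eigenbasis each of whose members
restricts on `K` either to zero or to an eigenvector of `H`. -/
noncomputable def IsHCospectral [Fintype X] [DecidableEq X] (K : Set X) [DecidablePred (· ∈ K)]
    (M : Matrix X X ℂ) (H : Matrix K K ℂ) : Prop :=
  ∃ ψ : X → (X → ℂ),
    (∀ a b, hermInner (ψ a) (ψ b) = if a = b then 1 else 0) ∧
    (∀ a, ∃ μ : ℂ, M.mulVec (ψ a) = μ • ψ a) ∧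
    (∀ a, restr K (ψ a) = 0 ∨
      (restr K (ψ a) ≠ 0 ∧ ∃ μ : ℂ, H.mulVec (restr K (ψ a)) = μ • restr K (ψ a)))

/-- `p` is the minimal polynomial of `N` relative to `w`: the monic polynomial of smallest
degree with `p(N) w = 0`. -/
def IsRelMinpoly {X : Type*} [Fintype X] [DecidableEq X] (N : Matrix X X ℂ) (w : X → ℂ)
    (p : Polynomial ℂ) : Prop :=
  p.Monic ∧ (Polynomial.aeval N p).mulVec w = 0 ∧
    ∀ q : Polynomial ℂ, q.Monic → (Polynomial.aeval N q).mulVec w = 0 →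
      p.natDegree ≤ q.natDegree


section Aux
open Polynomial

/-- `extz` as a linear map. -/
noncomputable def extzLin (K : Set X) [DecidablePred (· ∈ K)] :
    (K → ℂ) →ₗ[ℂ] (X → ℂ) where
  toFun := extz K
  map_add' u v := by funext x; by_cases h : x ∈ K <;> simp [extz, h]
  map_smul' c u := by funext x; by_cases h : x ∈ K <;> simp [extz, h]

theorem sum_mulVec_aux [Fintype X] {ι : Type*} (s : Finset ι) (A : ι → Matrix X X ℂ)
    (w : X → ℂ) : (∑ i ∈ s, A i).mulVec w = ∑ i ∈ s, (A i).mulVec w := by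
  classical
  induction s using Finset.induction with
  | empty => simp [Matrix.zero_mulVec]
  | insert a s h ih => simp [Finset.sum_insert h, Matrix.add_mulVec, ih]

theorem aeval_mulVec_eig [Fintype X] [DecidableEq X]
    (M : Matrix X X ℂ) (u : X → ℂ) (μ : ℂ) (h : M.mulVec u = μ • u) (p : ℂ[X]) :
    (aeval M p).mulVec u = p.eval μ • u := by
  have hpow : ∀ n : ℕ, (M ^ n).mulVec u = μ ^ n • u := by
    intro n
    induction n with
    | zero => simp
    | succ n ih =>
      rw [pow_succ, ← Matrix.mulVec_mulVec, h]
      simp [Matrix.mulVec_smul, ih, pow_succ, smul_smul, mul_comm]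
  induction p using Polynomial.induction_on' with
  | add p q hp hq => simp [Matrix.add_mulVec, hp, hq, add_smul]
  | monomial n a =>
    rw [aeval_monomial, eval_monomial]
    rw [Algebra.algebraMap_eq_smul_one, smul_mul_assoc, one_mul,
      Matrix.smul_mulVec, hpow, smul_smul]

end Aux

open Polynomial in
theorem stmt_6 {X : Type*} [Fintype X] [DecidableEq X]
    (K : Set X) [DecidablePred (· ∈ K)] (hK : K.Nonempty)
    (M : Matrix X X ℂ) (hMnormal : M * Mᴴ = Mᴴ * M)
    (H : Matrix K K ℂ) (hHnormal : H * Hᴴ = Hᴴ * H)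
    (d : ℕ) (θ : Fin d → ℂ) (hθ : Function.Injective θ)
    (E : Fin d → Matrix X X ℂ)
    (hEherm : ∀ i, (E i)ᴴ = E i) (hEidem : ∀ i, E i * E i = E i)
    (hEorth : ∀ i i', i ≠ i' → E i * E i' = 0) (hEsum : ∑ i, E i = 1)
    (hMspec : M = ∑ i, θ i • E i)
    -- `H` has `|K|` distinct eigenvalues
    (r : ℕ) (hr : r = Fintype.card K) (ρ : Fin r → ℂ) (hρ : Function.Injective ρ)
    (F : Fin r → Matrix K K ℂ)
    (hFherm : ∀ j, (F j)ᴴ = F j) (hFidem : ∀ j, F j * F j = F j)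
    (hForth : ∀ j j', j ≠ j' → F j * F j' = 0) (hFsum : ∑ j, F j = 1)
    (hHspec : H = ∑ j, ρ j • F j)
    (hcosp : IsHCospectral K M H)
    -- `v j` is a fixed eigenvector spanning `im F_j`
    (v : Fin r → (K → ℂ)) (hvne : ∀ j, v j ≠ 0)
    (hv : ∀ j, LinearMap.range (F j).mulVecLin = Submodule.span ℂ {v j})
    (b : Fin d → Fin r → ℕ)
    (hb : ∀ i j, b i j = Module.finrank ℂ (Submodule.span ℂ
      ((fun w : K → ℂ => (E i).mulVec (extz K w)) ''
        (LinearMap.range (F j).mulVecLin : Set (K → ℂ))))) :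
    ∀ j, IsRelMinpoly M (extz K (v j))
      (∏ i, (Polynomial.X - Polynomial.C (θ i)) ^ (b i j)) := by
  intro j
  classical
  set w : X → ℂ := extz K (v j) with hwdef
  -- b i j = 0 or 1 according to whether (E i).mulVec w vanishes
  have hbval : ∀ i, b i j = if (E i).mulVec w = 0 then 0 else 1 := by
    intro i
    rw [hb i j, hv j]
    have himg : (fun u : K → ℂ => (E i).mulVec (extz K u)) ''
        ((Submodule.span ℂ {v j} : Submodule ℂ (K → ℂ)) : Set (K → ℂ))
        = (((E i).mulVecLin ∘ₗ extzLin K) ''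
          ((Submodule.span ℂ {v j} : Submodule ℂ (K → ℂ)) : Set (K → ℂ))) := rfl
    rw [himg, Submodule.span_image, Submodule.span_eq, Submodule.map_span,
      Set.image_singleton]
    have heq : ((E i).mulVecLin ∘ₗ extzLin K) (v j) = (E i).mulVec w := rfl
    rw [heq]
    by_cases hz : (E i).mulVec w = 0
    · simp [hz]
    · simp [hz, finrank_span_singleton hz]
  set S : Finset (Fin d) := Finset.univ.filter (fun i => ¬ (E i).mulVec w = 0) with hSdef
  set P : ℂ[X] := ∏ i, (Polynomial.X - Polynomial.C (θ i)) ^ (b i j) with hPdef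
  have hP : P = ∏ i ∈ S, (Polynomial.X - Polynomial.C (θ i)) := by
    rw [hPdef, hSdef, Finset.prod_filter]
    refine Finset.prod_congr rfl fun i _ => ?_
    rw [hbval i]
    by_cases hz : (E i).mulVec w = 0 <;> simp [hz]
  -- each E_i w is an eigenvector (possibly zero) of M
  have heig : ∀ i, M.mulVec ((E i).mulVec w) = θ i • (E i).mulVec w := by
    intro i
    rw [Matrix.mulVec_mulVec]
    have hME : M * E i = θ i • E i := by
      rw [hMspec, Finset.sum_mul, Finset.sum_eq_single i]
      · rw [smul_mul_assoc, hEidem]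
      · intro k _ hk
        rw [smul_mul_assoc, hEorth k i hk, smul_zero]
      · intro h; exact absurd (Finset.mem_univ i) h
    rw [hME, Matrix.smul_mulVec]
  have hwsum : w = ∑ i, (E i).mulVec w := by
    have := sum_mulVec_aux Finset.univ E w
    rw [hEsum, Matrix.one_mulVec] at this
    exact this
  have hkey : ∀ q : ℂ[X], (aeval M q).mulVec w = ∑ i, q.eval (θ i) • (E i).mulVec w := by
    intro q
    conv_lhs => rw [hwsum]
    rw [← Matrix.mulVecLin_apply, map_sum]
    exact Finset.sum_congr rfl fun i _ => by
      rw [Matrix.mulVecLin_apply, aeval_mulVec_eig M _ _ (heig i) q]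
  refine ⟨?_, ?_, ?_⟩
  · exact monic_prod_of_monic _ _ fun i _ => (monic_X_sub_C (θ i)).pow (b i j)
  · rw [hkey]
    refine Finset.sum_eq_zero fun i _ => ?_
    by_cases hz : (E i).mulVec w = 0
    · rw [hz, smul_zero]
    · have hiS : i ∈ S := by simp [hSdef, hz]
      have : P.eval (θ i) = 0 := by
        rw [hP, eval_prod]
        exact Finset.prod_eq_zero hiS (by simp)
      rw [this, zero_smul]
  · intro q hqm hq0
    rw [hkey] at hq0
    have hroot : ∀ k ∈ S, q.eval (θ k) = 0 := by
      intro k hk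
      have hkne : ¬ (E k).mulVec w = 0 := (Finset.mem_filter.mp hk).2
      have h2 := congrArg ((E k).mulVecLin) hq0
      rw [map_sum, map_zero] at h2
      simp only [Matrix.mulVecLin_apply, Matrix.mulVec_smul, Matrix.mulVec_mulVec] at h2
      rw [Finset.sum_eq_single k] at h2
      · rw [hEidem k] at h2
        rcases smul_eq_zero.mp h2 with h | h
        · exact h
        · exact absurd h hkne
      · intro i _ hik
        rw [hEorth k i (Ne.symm hik), Matrix.zero_mulVec, smul_zero]
      · intro h; exact absurd (Finset.mem_univ k) h
    have hqne : q ≠ 0 := hqm.ne_zero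
    have hsub : S.image θ ⊆ q.roots.toFinset := by
      intro x hx
      obtain ⟨k, hk, rfl⟩ := Finset.mem_image.mp hx
      rw [Multiset.mem_toFinset, mem_roots hqne]
      exact hroot k hk
    have hdegP : P.natDegree = S.card := by
      rw [hP, natDegree_prod _ _ fun i _ => X_sub_C_ne_zero (θ i)]
      simp [natDegree_X_sub_C]
    calc P.natDegree = S.card := hdegP
      _ = (S.image θ).card := (Finset.card_image_of_injective S hθ).symm
      _ ≤ q.roots.toFinset.card := Finset.card_le_card hsub
      _ ≤ Multiset.card q.roots := Multiset.toFinset_card_le _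
      _ ≤ q.natDegree := card_roots' q
end

section
/- Let X = X_1 ∪ X_2 be a finite index set with K = X_1 ∩ X_2. Let M_1 and M_2 be Hermitian matrices in ℂ^{X×X} supported on X_1 and X_2 respectively (i.e., M_i has nonzero entries only in rows and columns indexed by X_i). Let H ∈ ℂ^{K×K} be a normal matrix. If K is H-cospectral in M_1 and K is H-cospectral in M_2, then K is H-cospectral in M = M_1 + M_2. -/
open Matrix Set

variable {X : Type*}

local notation "⟪" x ", " y "⟫" => @inner ℂ _ _ x y

lemma hermInner_eq_inner {n : Type*} [Fintype n] (v w : EuclideanSpace ℂ n) :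
    ⟪v, w⟫ = hermInner v w := by
  simp [hermInner, PiLp.inner_apply, RCLike.inner_apply, mul_comm]

section KK
variable {X : Type*} [Fintype X] [DecidableEq X] (K : Set X) [DecidablePred (· ∈ K)]
set_option linter.unusedSectionVars false

def RL : EuclideanSpace ℂ X →ₗ[ℂ] EuclideanSpace ℂ ↥K where
  toFun v := WithLp.toLp 2 (restr K v)
  map_add' _ _ := rfl
  map_smul' _ _ := rfl

def JL : EuclideanSpace ℂ ↥K →ₗ[ℂ] EuclideanSpace ℂ X where
  toFun u := WithLp.toLp 2 (extz K u)
  map_add' u v := by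
    ext x
    show extz K (u + v) x = extz K u x + extz K v x
    by_cases h : x ∈ K <;> simp [extz, h] <;> rfl
  map_smul' c u := by
    ext x
    show extz K (c • u) x = c * extz K u x
    by_cases h : x ∈ K <;> simp [extz, h] <;> rfl

lemma RL_JL (u : EuclideanSpace ℂ ↥K) : RL K (JL K u) = u := by
  ext k
  show extz K u.ofLp (k : X) = u.ofLp k
  simp [extz]

lemma sum_extz (w : ↥K → ℂ) : ∑ x : X, extz K w x = ∑ k : ↥K, w k := by
  classical
  rw [← Finset.sum_subset (Finset.subset_univ K.toFinset)
    (fun x _ hx => by simp [extz, (by simpa using hx : x ∉ K)])]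
  rw [Finset.sum_subtype (p := (· ∈ K)) K.toFinset (by simp) (extz K w)]
  exact Finset.sum_congr rfl fun k _ => by simp [extz, k.2]

lemma inner_JL (u : EuclideanSpace ℂ ↥K) (v : EuclideanSpace ℂ X) :
    ⟪JL K u, v⟫ = ⟪u, RL K v⟫ := by
  simp only [PiLp.inner_apply, RCLike.inner_apply]
  conv_lhs => enter [2, x]; rw [mul_comm]
  conv_rhs => enter [2, x]; rw [mul_comm]
  have : ∀ x : X, (starRingEnd ℂ) ((JL K u) x) * v x
      = extz K (fun k => (starRingEnd ℂ) (u k) * v k) x := by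
    intro x
    simp only [JL, LinearMap.coe_mk, AddHom.coe_mk, extz]
    by_cases h : x ∈ K <;> simp [h]
  rw [Finset.sum_congr rfl fun x _ => this x, sum_extz]
  rfl

end KK

/-- view a plain function as an element of Euclidean space -/
def toE {n : Type*} [Fintype n] (v : n → ℂ) : EuclideanSpace ℂ n := WithLp.toLp 2 v

section adj
variable {n : Type*} [Fintype n] [DecidableEq n]

lemma inner_mulVec_left (A : Matrix n n ℂ) (v w : EuclideanSpace ℂ n) :
    ⟪toE (A.mulVec v), w⟫ = ⟪v, toE (Aᴴ.mulVec w)⟫ := by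
  have h := Matrix.toEuclideanLin_conjTranspose_eq_adjoint A
  have h2 : toE (Aᴴ.mulVec w) = Matrix.toEuclideanLin Aᴴ w := rfl
  rw [h2, h, LinearMap.adjoint_inner_right]
  rfl

lemma inner_pow_mulVec (A : Matrix n n ℂ) (hA : Aᴴ = A) (a : ℕ) (v w : EuclideanSpace ℂ n) :
    ⟪toE ((A ^ a).mulVec v), w⟫ = ⟪v, toE ((A ^ a).mulVec w)⟫ := by
  have hpow : (A ^ a)ᴴ = A ^ a := by rw [Matrix.conjTranspose_pow, hA]
  rw [inner_mulVec_left, hpow]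

noncomputable def eigSp (H : Matrix n n ℂ) (μ : ℂ) : Submodule ℂ (EuclideanSpace ℂ n) :=
  LinearMap.ker (Matrix.toEuclideanLin H - μ • LinearMap.id)

lemma mem_eigSp {H : Matrix n n ℂ} {μ : ℂ} {u : EuclideanSpace ℂ n} :
    u ∈ eigSp H μ ↔ toE (H.mulVec u) = μ • u := by
  simp only [eigSp, LinearMap.mem_ker, LinearMap.sub_apply, LinearMap.smul_apply,
    LinearMap.id_apply, sub_eq_zero]
  exact Iff.rfl

lemma conj_eig {H : Matrix n n ℂ} (hn : H * Hᴴ = Hᴴ * H) {μ : ℂ} {u : EuclideanSpace ℂ n}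
    (hu : toE (H.mulVec u) = μ • u) : toE (Hᴴ.mulVec u) = (starRingEnd ℂ) μ • u := by
  set z : EuclideanSpace ℂ n := toE (Hᴴ.mulVec u) with hz
  set a : ℂ := ⟪u, u⟫ with ha
  have hz2 : ⟪z, u⟫ = μ * a := by
    rw [hz, inner_mulVec_left, Matrix.conjTranspose_conjTranspose, hu, inner_smul_right, ha]
  have hz3 : ⟪u, z⟫ = (starRingEnd ℂ) μ * a := by
    have h5 : ⟪toE (H.mulVec u), u⟫ = ⟪u, z⟫ := inner_mulVec_left H u u
    rw [← h5, hu, inner_smul_left, ha]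
  have hz1 : ⟪z, z⟫ = μ * ((starRingEnd ℂ) μ * a) := by
    have h1 : ⟪z, z⟫ = ⟪u, toE (H.mulVec z)⟫ := by
      have h6 := inner_mulVec_left Hᴴ u z
      rwa [Matrix.conjTranspose_conjTranspose] at h6
    have h2 : toE (H.mulVec z) = μ • z := by
      show toE (H.mulVec (Hᴴ.mulVec u)) = μ • z
      rw [Matrix.mulVec_mulVec, hn, ← Matrix.mulVec_mulVec]
      show toE (Hᴴ.mulVec (H.mulVec u)) = μ • z
      rw [show H.mulVec u = μ • (u : n → ℂ) from congrArg WithLp.ofLp hu]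
      rw [Matrix.mulVec_smul]
      rfl
    rw [h1, h2, inner_smul_right, hz3]
  have key : ⟪z - (starRingEnd ℂ) μ • u, z - (starRingEnd ℂ) μ • u⟫ = 0 := by
    rw [inner_sub_left, inner_sub_right, inner_sub_right, inner_smul_left, inner_smul_right,
      inner_smul_left, inner_smul_right, hz1, hz2, hz3]
    simp only [RingHomCompTriple.comp_apply, Complex.conj_conj, RingHom.id_apply, ha]
    ring_nf
  have h0 : z - (starRingEnd ℂ) μ • u = 0 := inner_self_eq_zero.mp key
  have h7 := sub_eq_zero.mp h0
  rw [hz] at h7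
  exact h7

lemma eig_orthogonal {H : Matrix n n ℂ} (hn : H * Hᴴ = Hᴴ * H) {μ ν : ℂ} (hne : μ ≠ ν)
    {u v : EuclideanSpace ℂ n} (hu : toE (H.mulVec u) = μ • u) (hv : toE (H.mulVec v) = ν • v) :
    ⟪u, v⟫ = 0 := by
  have h1 : ⟪u, toE (H.mulVec v)⟫ = ν * ⟪u, v⟫ := by
    rw [hv, inner_smul_right]
  have h2 : ⟪u, toE (H.mulVec v)⟫ = μ * ⟪u, v⟫ := by
    have h3 := inner_mulVec_left Hᴴ u v
    rw [Matrix.conjTranspose_conjTranspose] at h3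
    rw [← h3, conj_eig hn hu, inner_smul_left]
    simp
  have h4 := h1.symm.trans h2
  have hμν : (μ - ν) * ⟪u, v⟫ = 0 := by linear_combination -h4
  rcases mul_eq_zero.mp hμν with h | h
  · exact absurd (sub_eq_zero.mp h) hne
  · exact h

end adj

lemma core' {E : Type*} [NormedAddCommGroup E] [InnerProductSpace ℂ E] [FiniteDimensional ℂ E]
    {ι : Type} [Fintype ι] [DecidableEq ι] (V : ι → Submodule ℂ E)
    (T : E →ₗ[ℂ] E) (hsym : T.IsSymmetric)
    (horth : ∀ i j, i ≠ j → ∀ v ∈ V i, ∀ w ∈ V j, ⟪v, w⟫ = (0:ℂ))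
    (hsup : ⨆ i, V i = ⊤)
    (hinv : ∀ i, ∀ v ∈ V i, T v ∈ V i) :
    ∃ w : (Σ i, Fin (Module.finrank ℂ ↥(V i))) → E,
      Orthonormal ℂ w ∧ (∀ p, ∃ μ : ℝ, T (w p) = (μ:ℂ) • w p) ∧ (∀ p, w p ∈ V p.1) ∧
      Fintype.card (Σ i, Fin (Module.finrank ℂ ↥(V i))) = Module.finrank ℂ E := by
  classical
  have hsymi : ∀ i, ((T.restrict (hinv i)).IsSymmetric) :=
    fun i => hsym.restrict_invariant (hinv i)
  let b : ∀ i, OrthonormalBasis (Fin (Module.finrank ℂ ↥(V i))) ℂ (V i) :=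
    fun i => (hsymi i).eigenvectorBasis rfl
  have hfam : OrthogonalFamily ℂ (fun i => V i) (fun i => (V i).subtypeₗᵢ) :=
    fun i j hij v w => horth i j hij v v.2 w w.2
  have hint : DirectSum.IsInternal V :=
    (DirectSum.isInternal_submodule_iff_iSupIndep_and_iSup_eq_top V).mpr
      ⟨hfam.independent, hsup⟩
  let B := hint.collectedOrthonormalBasis hfam b
  have hBcoe : ∀ p : Σ i, Fin (Module.finrank ℂ ↥(V i)),
      (B p : E) = (b p.1 p.2 : E) := by
    intro p
    simp only [B, DirectSum.IsInternal.collectedOrthonormalBasis]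
    rw [Module.Basis.coe_toOrthonormalBasis, DirectSum.IsInternal.collectedBasis_coe]
    simp
  refine ⟨fun p => (B p : E), B.orthonormal, ?_, ?_, ?_⟩
  · intro p
    obtain ⟨i, j⟩ := p
    dsimp only
    refine ⟨(hsymi i).eigenvalues rfl j, ?_⟩
    have h1 := (hsymi i).apply_eigenvectorBasis rfl j
    have h2 : (B ⟨i, j⟩ : E) = ((b i j : V i) : E) := hBcoe ⟨i, j⟩
    rw [h2]
    have h3 : T ((b i j : V i) : E) = ((T.restrict (hinv i)) (b i j) : E) := by
      rw [LinearMap.restrict_coe_apply]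
    rw [h3, h1]
    push_cast
    rfl
  · intro p
    dsimp only
    rw [hBcoe p]
    exact (b p.1 p.2).2
  · exact (Module.finrank_eq_card_basis B.toBasis).symm

lemma core {X : Type*} [Fintype X] [DecidableEq X] (K : Set X) [DecidablePred (· ∈ K)]
    (M : Matrix X X ℂ) (hM : Mᴴ = M) (H : Matrix K K ℂ)
    {ι : Type} [Fintype ι] [DecidableEq ι] (V : ι → Submodule ℂ (EuclideanSpace ℂ X))
    (horth : ∀ i j, i ≠ j → ∀ v ∈ V i, ∀ w ∈ V j, ⟪v, w⟫ = (0:ℂ))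
    (hsup : ⨆ i, V i = ⊤)
    (hinv : ∀ i, ∀ v ∈ V i, toE (M.mulVec v) ∈ V i)
    (hgood : ∀ i, (∀ v ∈ V i, restr K v = 0) ∨
      ∃ μ : ℂ, ∀ v ∈ V i, H.mulVec (restr K v) = μ • restr K v) :
    IsHCospectral K M H := by
  classical
  have hsym : (Matrix.toEuclideanLin M).IsSymmetric :=
    Matrix.isHermitian_iff_isSymmetric.mp hM
  have hinv' : ∀ i, ∀ v ∈ V i, Matrix.toEuclideanLin M v ∈ V i := fun i v hv => hinv i v hv
  obtain ⟨w, hON, heig, hmem, hcard⟩ := core' V _ hsym horth hsup hinv'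
  have hcard' : Fintype.card X = Fintype.card (Σ i, Fin (Module.finrank ℂ ↥(V i))) := by
    rw [hcard, finrank_euclideanSpace]
  let e := Fintype.equivOfCardEq hcard'
  refine ⟨fun a => w (e a), ?_, ?_, ?_⟩
  · intro a c
    dsimp only
    rw [← hermInner_eq_inner (n := X) (w (e a)) (w (e c)), orthonormal_iff_ite.mp hON]
    simp [e.injective.eq_iff]
  · intro a
    obtain ⟨μ, hμ⟩ := heig (e a)
    exact ⟨(μ:ℂ), congrArg WithLp.ofLp hμ⟩
  · intro a
    rcases hgood ((e a).1) with h | ⟨μ, h⟩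
    · exact Or.inl (h _ (hmem (e a)))
    · by_cases hz : restr K (w (e a)) = 0
      · exact Or.inl hz
      · exact Or.inr ⟨hz, μ, h _ (hmem (e a))⟩

section stable
variable {X : Type*} [Fintype X] [DecidableEq X] {K : Set X} [DecidablePred (· ∈ K)]
set_option linter.unusedSectionVars false

lemma stableA {N : Matrix X X ℂ} {H : Matrix ↥K ↥K ℂ} (hHn : H * Hᴴ = Hᴴ * H)
    {ψ : X → EuclideanSpace ℂ X} (hON : Orthonormal ℂ ψ)
    (hTop : ⊤ ≤ Submodule.span ℂ (Set.range ψ))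
    {lam : X → ℂ} (hlam : ∀ c, toE (N.mulVec (ψ c)) = lam c • ψ c)
    {muf : X → ℂ} (hmuf : ∀ c, RL K (ψ c) ∈ eigSp H (muf c))
    {μ : ℂ} {u : EuclideanSpace ℂ ↥K} (hu : u ∈ eigSp H μ) (a : ℕ) :
    RL K (toE ((N ^ a).mulVec (JL K u))) ∈ eigSp H μ := by
  classical
  let B : OrthonormalBasis X ℂ (EuclideanSpace ℂ X) := OrthonormalBasis.mk hON hTop
  have hBc : ∀ c, B c = ψ c := fun c => by simp [B, OrthonormalBasis.coe_mk]
  have pow_eig : ∀ (c : X) (m : ℕ), toE ((N ^ m).mulVec (ψ c)) = (lam c ^ m) • ψ c := by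
    intro c m
    induction m with
    | zero =>
      show toE ((1 : Matrix X X ℂ).mulVec (ψ c)) = (lam c ^ 0) • ψ c
      rw [Matrix.one_mulVec, pow_zero]
      show (ψ c : EuclideanSpace ℂ X) = (1:ℂ) • ψ c
      rw [one_smul]
    | succ m ih =>
      have h1 : (N ^ (m+1)).mulVec (ψ c) = N.mulVec ((N ^ m).mulVec (ψ c)) := by
        rw [Matrix.mulVec_mulVec, ← pow_succ']
      show toE ((N ^ (m+1)).mulVec (ψ c)) = (lam c ^ (m+1)) • ψ c
      rw [h1]
      have h2 : (N ^ m).mulVec (ψ c) = (lam c ^ m) • (ψ c : X → ℂ) := congrArg WithLp.ofLp ih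
      rw [h2, Matrix.mulVec_smul]
      show (lam c ^ m) • toE (N.mulVec (ψ c)) = (lam c ^ (m+1)) • ψ c
      rw [hlam c, smul_smul, ← pow_succ]
  have hexp : toE ((N ^ a).mulVec (JL K u))
      = ∑ c : X, (B.repr (JL K u) c * lam c ^ a) • ψ c := by
    have h0 : (JL K u : EuclideanSpace ℂ X) = ∑ c, B.repr (JL K u) c • B c :=
      (B.sum_repr (JL K u)).symm
    calc toE ((N ^ a).mulVec (JL K u)) = Matrix.toEuclideanLin (N ^ a) (JL K u) := rfl
      _ = Matrix.toEuclideanLin (N ^ a) (∑ c, B.repr (JL K u) c • B c) := by rw [← h0]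
      _ = ∑ c, B.repr (JL K u) c • Matrix.toEuclideanLin (N ^ a) (B c) := by
          rw [map_sum]
          exact Finset.sum_congr rfl fun c _ => by rw [_root_.map_smul]
      _ = ∑ c : X, (B.repr (JL K u) c * lam c ^ a) • ψ c := by
          refine Finset.sum_congr rfl fun c _ => ?_
          rw [hBc c]
          have h5 : Matrix.toEuclideanLin (N ^ a) (ψ c) = toE ((N ^ a).mulVec (ψ c)) := rfl
          rw [h5, pow_eig c a, smul_smul]
  rw [hexp, map_sum]
  apply Submodule.sum_mem
  intro c _
  rw [_root_.map_smul]
  by_cases hμc : muf c = μ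
  · exact Submodule.smul_mem _ _ (hμc ▸ hmuf c)
  · have h3 : ⟪u, RL K (ψ c)⟫ = (0:ℂ) :=
      eig_orthogonal hHn (fun h => hμc h.symm) (mem_eigSp.mp hu) (mem_eigSp.mp (hmuf c))
    have h4 : B.repr (JL K u) c = 0 := by
      rw [B.repr_apply_apply, hBc c, ← inner_conj_symm, inner_JL, h3, map_zero]
    rw [h4, zero_mul, zero_smul]
    exact Submodule.zero_mem _

lemma unpack {N : Matrix X X ℂ} {H : Matrix ↥K ↥K ℂ}
    (h : IsHCospectral K N H) :
    ∃ (ψ : X → EuclideanSpace ℂ X) (lam muf : X → ℂ),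
      Orthonormal ℂ ψ ∧ ⊤ ≤ Submodule.span ℂ (Set.range ψ) ∧
      (∀ c, toE (N.mulVec (ψ c)) = lam c • ψ c) ∧
      (∀ c, RL K (ψ c) ∈ eigSp H (muf c)) := by
  classical
  obtain ⟨ψ, horth, heig, hres⟩ := h
  have hON : Orthonormal ℂ (fun a => toE (ψ a)) := orthonormal_iff_ite.mpr (fun a b => by
    rw [hermInner_eq_inner]
    exact horth a b)
  have hTop : ⊤ ≤ Submodule.span ℂ (Set.range fun a => toE (ψ a)) := by
    rw [hON.linearIndependent.span_eq_top_of_card_eq_finrank'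
      (by rw [finrank_euclideanSpace])]
  have hm : ∀ c, ∃ m : ℂ, RL K (toE (ψ c)) ∈ eigSp H m := by
    intro c
    rcases hres c with h0 | ⟨_, m, hmm⟩
    · refine ⟨0, ?_⟩
      have hz : RL K (toE (ψ c)) = (0 : EuclideanSpace ℂ ↥K) := congrArg (WithLp.toLp 2) h0
      rw [hz]
      exact Submodule.zero_mem _
    · exact ⟨m, mem_eigSp.mpr (congrArg (WithLp.toLp 2) hmm)⟩
  exact ⟨fun a => toE (ψ a), fun c => (heig c).choose, fun c => (hm c).choose,
    hON, hTop, fun c => congrArg (WithLp.toLp 2) (heig c).choose_spec, fun c => (hm c).choose_spec⟩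
end stable

lemma cross_support {X : Type*} [Fintype X] (K : Set X) [DecidablePred (· ∈ K)]
    (A B : Matrix X X ℂ)
    (h : ∀ x, x ∉ K → (∀ y, A y x = 0) ∨ (∀ w : X → ℂ, B.mulVec w x = 0)) (z : X → ℂ) :
    A.mulVec (B.mulVec z) = A.mulVec (extz K (restr K (B.mulVec z))) := by
  funext y
  show ∑ x, A y x * (B.mulVec z) x = ∑ x, A y x * extz K (restr K (B.mulVec z)) x
  refine Finset.sum_congr rfl fun x _ => ?_
  by_cases hx : x ∈ K
  · simp [extz, restr, hx]
  · rcases h x hx with h1 | h2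
    · simp [extz, hx, h1 y]
    · simp [extz, hx, h2 z]


set_option maxHeartbeats 1000000 in
theorem stmt_8 {X : Type*} [Fintype X] [DecidableEq X]
    (X₁ X₂ : Set X) (hcover : X₁ ∪ X₂ = Set.univ)
    (K : Set X) [DecidablePred (· ∈ K)] (hK : K = X₁ ∩ X₂)
    (M₁ M₂ : Matrix X X ℂ)
    (hM₁herm : M₁ᴴ = M₁) (hM₂herm : M₂ᴴ = M₂)
    (hsupp₁ : ∀ x y, (x ∉ X₁ ∨ y ∉ X₁) → M₁ x y = 0)
    (hsupp₂ : ∀ x y, (x ∉ X₂ ∨ y ∉ X₂) → M₂ x y = 0)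
    (H : Matrix K K ℂ) (hHnormal : H * Hᴴ = Hᴴ * H)
    (hcosp₁ : IsHCospectral K M₁ H) (hcosp₂ : IsHCospectral K M₂ H) :
    IsHCospectral K (M₁ + M₂) H := by
  classical
  obtain ⟨ψ₁, lam₁, muf₁, hON₁, hTop₁, hlam₁, hmuf₁⟩ := unpack hcosp₁
  obtain ⟨ψ₂, lam₂, muf₂, hON₂, hTop₂, hlam₂, hmuf₂⟩ := unpack hcosp₂
  have hst₁ : ∀ (μ : ℂ) (u : EuclideanSpace ℂ ↥K), u ∈ eigSp H μ → ∀ a : ℕ,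
      RL K (toE ((M₁ ^ a).mulVec (JL K u))) ∈ eigSp H μ :=
    fun μ u hu a => stableA hHnormal hON₁ hTop₁ hlam₁ hmuf₁ hu a
  have hst₂ : ∀ (μ : ℂ) (u : EuclideanSpace ℂ ↥K), u ∈ eigSp H μ → ∀ a : ℕ,
      RL K (toE ((M₂ ^ a).mulVec (JL K u))) ∈ eigSp H μ :=
    fun μ u hu a => stableA hHnormal hON₂ hTop₂ hlam₂ hmuf₂ hu a
  set gens : ℂ → Set (EuclideanSpace ℂ X) := fun μ =>
    {v | ∃ (a : ℕ) (u : EuclideanSpace ℂ ↥K), u ∈ eigSp H μ ∧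
      (v = toE ((M₁ ^ a).mulVec (JL K u)) ∨ v = toE ((M₂ ^ a).mulVec (JL K u)))} with hgens
  set F : ℂ → Submodule ℂ (EuclideanSpace ℂ X) := fun μ => Submodule.span ℂ (gens μ) with hF
  have hgr : ∀ μ, ∀ v ∈ gens μ, RL K v ∈ eigSp H μ := by
    rintro μ v ⟨a, u, hu, (rfl | rfl)⟩
    · exact hst₁ μ u hu a
    · exact hst₂ μ u hu a
  have hFr : ∀ μ, ∀ v ∈ F μ, RL K v ∈ eigSp H μ := by
    intro μ
    have hle : F μ ≤ (eigSp H μ).comap (RL K) :=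
      Submodule.span_le.mpr (fun v hv => hgr μ v hv)
    exact fun v hv => hle hv
  have hcr₁ : ∀ z : X → ℂ,
      M₁.mulVec (M₂.mulVec z) = M₁.mulVec (extz K (restr K (M₂.mulVec z))) := by
    intro z
    apply cross_support
    intro x hx
    rw [hK] at hx
    by_cases h1 : x ∈ X₁
    · right
      intro w
      have h2 : x ∉ X₂ := fun h2 => hx ⟨h1, h2⟩
      show ∑ y, M₂ x y * w y = 0
      exact Finset.sum_eq_zero fun y _ => by rw [hsupp₂ x y (Or.inl h2), zero_mul]
    · left
      exact fun y => hsupp₁ y x (Or.inr h1)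
  have hcr₂ : ∀ z : X → ℂ,
      M₂.mulVec (M₁.mulVec z) = M₂.mulVec (extz K (restr K (M₁.mulVec z))) := by
    intro z
    apply cross_support
    intro x hx
    rw [hK] at hx
    by_cases h1 : x ∈ X₂
    · right
      intro w
      have h2 : x ∉ X₁ := fun h2 => hx ⟨h2, h1⟩
      show ∑ y, M₁ x y * w y = 0
      exact Finset.sum_eq_zero fun y _ => by rw [hsupp₁ x y (Or.inl h2), zero_mul]
    · left
      exact fun y => hsupp₂ y x (Or.inr h1)
  -- invariance under M₁
  have hinv₁ : ∀ μ, ∀ v ∈ F μ, toE (M₁.mulVec v) ∈ F μ := by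
    intro μ
    have hmap : Submodule.map (Matrix.toEuclideanLin M₁) (F μ) ≤ F μ := by
      rw [hF]
      rw [Submodule.map_span, Submodule.span_le]
      rintro _ ⟨v, ⟨a, u, hu, (rfl | rfl)⟩, rfl⟩
      · apply Submodule.subset_span
        refine ⟨a + 1, u, hu, Or.inl ?_⟩
        show toE (M₁ *ᵥ ((M₁ ^ a) *ᵥ (JL K u))) = toE ((M₁ ^ (a+1)) *ᵥ (JL K u))
        rw [Matrix.mulVec_mulVec, ← pow_succ']
      · cases a with
        | zero =>
          apply Submodule.subset_span
          refine ⟨1, u, hu, Or.inl ?_⟩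
          show toE (M₁ *ᵥ ((M₂ ^ 0) *ᵥ (JL K u))) = toE ((M₁ ^ 1) *ᵥ (JL K u))
          rw [pow_zero, Matrix.one_mulVec, pow_one]
        | succ c =>
          apply Submodule.subset_span
          have e1 : (M₂ ^ (c+1)) *ᵥ (JL K u : X → ℂ)
              = M₂ *ᵥ ((M₂ ^ c) *ᵥ (JL K u : X → ℂ)) := by
            rw [Matrix.mulVec_mulVec, ← pow_succ']
          set z : X → ℂ := (M₂ ^ c) *ᵥ (JL K u : X → ℂ) with hz
          have hu' : RL K (toE (M₂ *ᵥ z)) ∈ eigSp H μ := by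
            rw [hz, show (M₂ *ᵥ ((M₂ ^ c) *ᵥ (JL K u : X → ℂ)))
              = (M₂ ^ (c+1)) *ᵥ (JL K u : X → ℂ) from e1.symm]
            exact hst₂ μ u hu (c+1)
          refine ⟨1, RL K (toE (M₂ *ᵥ z)), hu', Or.inl ?_⟩
          have lhs : Matrix.toEuclideanLin M₁ (toE ((M₂ ^ (c+1)) *ᵥ (JL K u)))
              = toE (M₁ *ᵥ (M₂ *ᵥ z)) := by rw [e1]; rfl
          rw [lhs, pow_one]
          exact congrArg toE (hcr₁ z)
    exact fun v hv => hmap ⟨v, hv, rfl⟩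
  have hinv₂ : ∀ μ, ∀ v ∈ F μ, toE (M₂.mulVec v) ∈ F μ := by
    intro μ
    have hmap : Submodule.map (Matrix.toEuclideanLin M₂) (F μ) ≤ F μ := by
      rw [hF]
      rw [Submodule.map_span, Submodule.span_le]
      rintro _ ⟨v, ⟨a, u, hu, (rfl | rfl)⟩, rfl⟩
      · cases a with
        | zero =>
          apply Submodule.subset_span
          refine ⟨1, u, hu, Or.inr ?_⟩
          show toE (M₂ *ᵥ ((M₁ ^ 0) *ᵥ (JL K u))) = toE ((M₂ ^ 1) *ᵥ (JL K u))
          rw [pow_zero, Matrix.one_mulVec, pow_one]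
        | succ c =>
          apply Submodule.subset_span
          have e1 : (M₁ ^ (c+1)) *ᵥ (JL K u : X → ℂ)
              = M₁ *ᵥ ((M₁ ^ c) *ᵥ (JL K u : X → ℂ)) := by
            rw [Matrix.mulVec_mulVec, ← pow_succ']
          set z : X → ℂ := (M₁ ^ c) *ᵥ (JL K u : X → ℂ) with hz
          have hu' : RL K (toE (M₁ *ᵥ z)) ∈ eigSp H μ := by
            rw [hz, show (M₁ *ᵥ ((M₁ ^ c) *ᵥ (JL K u : X → ℂ)))
              = (M₁ ^ (c+1)) *ᵥ (JL K u : X → ℂ) from e1.symm]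
            exact hst₁ μ u hu (c+1)
          refine ⟨1, RL K (toE (M₁ *ᵥ z)), hu', Or.inr ?_⟩
          have lhs : Matrix.toEuclideanLin M₂ (toE ((M₁ ^ (c+1)) *ᵥ (JL K u)))
              = toE (M₂ *ᵥ (M₁ *ᵥ z)) := by rw [e1]; rfl
          rw [lhs, pow_one]
          exact congrArg toE (hcr₂ z)
      · apply Submodule.subset_span
        refine ⟨a + 1, u, hu, Or.inr ?_⟩
        show toE (M₂ *ᵥ ((M₂ ^ a) *ᵥ (JL K u))) = toE ((M₂ ^ (a+1)) *ᵥ (JL K u))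
        rw [Matrix.mulVec_mulVec, ← pow_succ']
    exact fun v hv => hmap ⟨v, hv, rfl⟩
  -- iterated invariance
  have hpow₁ : ∀ μ (a : ℕ), ∀ v ∈ F μ, toE ((M₁ ^ a).mulVec v) ∈ F μ := by
    intro μ a
    induction a with
    | zero =>
      intro v hv
      show toE ((1 : Matrix X X ℂ) *ᵥ v) ∈ F μ
      rw [show ((1 : Matrix X X ℂ) *ᵥ (v : X → ℂ)) = (v : X → ℂ) from Matrix.one_mulVec _]
      exact hv
    | succ a ih =>
      intro v hv
      have e1 : (M₁ ^ (a+1)) *ᵥ (v : X → ℂ) = M₁ *ᵥ ((M₁ ^ a) *ᵥ (v : X → ℂ)) := by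
        rw [Matrix.mulVec_mulVec, ← pow_succ']
      rw [show toE ((M₁ ^ (a+1)) *ᵥ (v : X → ℂ)) = toE (M₁ *ᵥ ((M₁ ^ a) *ᵥ (v : X → ℂ)))
        from congrArg toE e1]
      exact hinv₁ μ _ (ih v hv)
  have hpow₂ : ∀ μ (a : ℕ), ∀ v ∈ F μ, toE ((M₂ ^ a).mulVec v) ∈ F μ := by
    intro μ a
    induction a with
    | zero =>
      intro v hv
      show toE ((1 : Matrix X X ℂ) *ᵥ v) ∈ F μ
      rw [show ((1 : Matrix X X ℂ) *ᵥ (v : X → ℂ)) = (v : X → ℂ) from Matrix.one_mulVec _]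
      exact hv
    | succ a ih =>
      intro v hv
      have e1 : (M₂ ^ (a+1)) *ᵥ (v : X → ℂ) = M₂ *ᵥ ((M₂ ^ a) *ᵥ (v : X → ℂ)) := by
        rw [Matrix.mulVec_mulVec, ← pow_succ']
      rw [show toE ((M₂ ^ (a+1)) *ᵥ (v : X → ℂ)) = toE (M₂ *ᵥ ((M₂ ^ a) *ᵥ (v : X → ℂ)))
        from congrArg toE e1]
      exact hinv₂ μ _ (ih v hv)
  -- orthogonality of the F μ
  have horthF : ∀ μ ν, μ ≠ ν → ∀ v ∈ F μ, ∀ w ∈ F ν, ⟪v, w⟫ = (0:ℂ) := by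
    intro μ ν hne
    have hO : F μ ⟂ F ν := by
      rw [hF]
      rw [Submodule.isOrtho_span]
      rintro g ⟨a, u, hu, (rfl | rfl)⟩ g' hg'
      · have hg'F : g' ∈ F ν := Submodule.subset_span hg'
        rw [inner_pow_mulVec M₁ hM₁herm a (JL K u) g', inner_JL]
        exact eig_orthogonal hHnormal hne (mem_eigSp.mp hu)
          (mem_eigSp.mp (hFr ν _ (hpow₁ ν a g' hg'F)))
      · have hg'F : g' ∈ F ν := Submodule.subset_span hg'
        rw [inner_pow_mulVec M₂ hM₂herm a (JL K u) g', inner_JL]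
        exact eig_orthogonal hHnormal hne (mem_eigSp.mp hu)
          (mem_eigSp.mp (hFr ν _ (hpow₂ ν a g' hg'F)))
    exact fun v hv w hw => Submodule.isOrtho_iff_inner_eq.mp hO v hv w hw
  -- index set
  set s : Finset ℂ := Finset.univ.image muf₁ with hs
  set G : Submodule ℂ (EuclideanSpace ℂ X) := ⨆ μ : ↥s, F ↑μ with hG
  have hFG : ∀ μ : ↥s, F ↑μ ≤ G := fun μ => le_iSup (fun ν : ↥s => F ↑ν) μ
  have hJG : ∀ u : EuclideanSpace ℂ ↥K, JL K u ∈ G := by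
    intro u
    have h1 : Submodule.span ℂ (Set.range ψ₁) = ⊤ := eq_top_iff.mpr hTop₁
    have h2 : u ∈ Submodule.map (RL K) (Submodule.span ℂ (Set.range ψ₁)) := by
      rw [h1]
      exact ⟨JL K u, Submodule.mem_top, RL_JL K u⟩
    rw [Submodule.map_span] at h2
    have h3 : JL K u ∈ Submodule.map (JL K) (Submodule.span ℂ ((RL K) '' (Set.range ψ₁))) :=
      ⟨u, h2, rfl⟩
    rw [Submodule.map_span] at h3
    refine Submodule.span_le.mpr ?_ h3
    rintro _ ⟨_, ⟨_, ⟨c, rfl⟩, rfl⟩, rfl⟩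
    have hin : JL K (RL K (ψ₁ c)) ∈ F (muf₁ c) := by
      apply Submodule.subset_span
      refine ⟨0, RL K (ψ₁ c), hmuf₁ c, Or.inl ?_⟩
      show JL K (RL K (ψ₁ c)) = toE ((M₁ ^ 0) *ᵥ (JL K (RL K (ψ₁ c))))
      rw [pow_zero]
      exact congrArg toE (Matrix.one_mulVec _).symm
    exact hFG ⟨muf₁ c, Finset.mem_image_of_mem _ (Finset.mem_univ c)⟩ hin
  -- the family
  set V : Option ↥s → Submodule ℂ (EuclideanSpace ℂ X) := fun o =>
    match o with
    | none => Gᗮ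
    | some μ => F ↑μ
    with hV
  have hMherm : (M₁ + M₂)ᴴ = M₁ + M₂ := by
    rw [Matrix.conjTranspose_add, hM₁herm, hM₂herm]
  have hinvF : ∀ μ, ∀ v ∈ F μ, toE ((M₁ + M₂).mulVec v) ∈ F μ := by
    intro μ v hv
    rw [show ((M₁ + M₂) *ᵥ (v : X → ℂ)) = (M₁ *ᵥ (v : X → ℂ)) + (M₂ *ᵥ (v : X → ℂ))
      from Matrix.add_mulVec _ _ _]
    exact Submodule.add_mem _ (hinv₁ μ v hv) (hinv₂ μ v hv)
  have hGinv : ∀ g ∈ G, toE ((M₁ + M₂).mulVec g) ∈ G := by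
    have hGmap : Submodule.map (Matrix.toEuclideanLin (M₁ + M₂)) G ≤ G := by
      rw [hG, Submodule.map_iSup]
      exact iSup_mono fun μ => Submodule.map_le_iff_le_comap.mpr
        (fun v hv => hinvF ↑μ v hv)
    exact fun g hg => hGmap ⟨g, hg, rfl⟩
  apply core K (M₁ + M₂) hMherm H V
  · rintro (_ | ⟨μ⟩) (_ | ⟨ν⟩) hij v hv w hw
    · exact absurd rfl hij
    · exact inner_eq_zero_symm.mpr (Submodule.mem_orthogonal _ v |>.mp hv w (hFG ν hw))
    · exact Submodule.mem_orthogonal _ w |>.mp hw v (hFG μ hv)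
    · have hμν : (μ : ℂ) ≠ (ν : ℂ) := fun h => hij (by rw [Subtype.ext h])
      exact horthF ↑μ ↑ν hμν v hv w hw
  · rw [iSup_option]
    have hnone : V none = Gᗮ := rfl
    have hsome : ⨆ μ : ↥s, V (some μ) = G := rfl
    rw [hnone, hsome, sup_comm]
    exact Submodule.sup_orthogonal_of_hasOrthogonalProjection
  · rintro (_ | ⟨μ⟩) v hv
    · refine Submodule.mem_orthogonal _ _ |>.mpr ?_
      intro g hg
      have h1 : ⟪toE ((M₁ + M₂) *ᵥ g), v⟫ = ⟪g, toE ((M₁ + M₂)ᴴ *ᵥ v)⟫ :=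
        inner_mulVec_left (M₁ + M₂) g v
      rw [hMherm] at h1
      have h2 : ⟪g, toE ((M₁ + M₂) *ᵥ v)⟫ = (0:ℂ) := by
        rw [← h1]
        exact Submodule.mem_orthogonal _ v |>.mp hv _ (hGinv g hg)
      exact h2
    · exact hinvF ↑μ v hv
  · rintro (_ | ⟨μ⟩)
    · left
      intro v hv
      have h1 : ⟪JL K (RL K v), v⟫ = (0:ℂ) :=
        Submodule.mem_orthogonal _ v |>.mp hv _ (hJG (RL K v))
      rw [inner_JL] at h1
      have h2 : RL K v = 0 := inner_self_eq_zero.mp h1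
      exact congrArg WithLp.ofLp h2
    · right
      exact ⟨↑μ, fun v hv => congrArg WithLp.ofLp (mem_eigSp.mp (hFr ↑μ v hv))⟩
end

section
/- Let M ∈ ℂ^{X×X} be a Hermitian matrix, K ⊆ X, and H ∈ ℂ^{K×K} a normal matrix. If K is H-cospectral in M, then for any real number Q, K is H-cospectral in M + Q·D_K, where D_K is the diagonal 0/1 matrix with 1's exactly on K. -/
open Matrix Set

variable {X : Type*}

section myaux
variable {n : Type*} [Fintype n]

lemma hermInner_eq (v w : n → ℂ) : hermInner v w = star v ⬝ᵥ w := rfl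

lemma hermInner_self_eq_zero {v : n → ℂ} (h : hermInner v v = 0) : v = 0 := by
  funext x
  have h2 : ∑ y, Complex.normSq (v y) = 0 := by
    have := congrArg Complex.re h
    simpa [hermInner, Complex.star_def, Complex.normSq_apply] using this
  have h3 := (Finset.sum_eq_zero_iff_of_nonneg
    (fun y (_ : y ∈ Finset.univ) => Complex.normSq_nonneg (v y))).mp h2 x (Finset.mem_univ x)
  simpa using Complex.normSq_eq_zero.mp h3

lemma hermInner_mulVec_right (A : Matrix n n ℂ) (v w : n → ℂ) :
    hermInner v (A.mulVec w) = hermInner (Aᴴ.mulVec v) w := by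
  simp only [hermInner_eq, Matrix.star_mulVec, Matrix.conjTranspose_conjTranspose]
  rw [Matrix.dotProduct_mulVec]

lemma hermInner_smul_right (c : ℂ) (v w : n → ℂ) :
    hermInner v (c • w) = c * hermInner v w := by
  simp [hermInner_eq, dotProduct_smul]

lemma hermInner_smul_left (c : ℂ) (v w : n → ℂ) :
    hermInner (c • v) w = star c * hermInner v w := by
  simp only [hermInner_eq, star_smul, smul_dotProduct, smul_eq_mul]

lemma hermInner_add_right (v w₁ w₂ : n → ℂ) :
    hermInner v (w₁ + w₂) = hermInner v w₁ + hermInner v w₂ := by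
  simp [hermInner_eq, dotProduct_add]

-- normal matrix: conj transpose eigenvector
lemma normal_conjT_eig [DecidableEq n] {H : Matrix n n ℂ} (hn : H * Hᴴ = Hᴴ * H)
    {α : ℂ} {u : n → ℂ} (h : H.mulVec u = α • u) :
    Hᴴ.mulVec u = (star α) • u := by
  set T : Matrix n n ℂ := H - α • 1 with hT
  have hTn : T * Tᴴ = Tᴴ * T := by
    simp only [hT, Matrix.conjTranspose_sub, Matrix.conjTranspose_smul,
      Matrix.conjTranspose_one, Matrix.sub_mul, Matrix.mul_sub, hn,
      Matrix.smul_mul, Matrix.mul_smul, Matrix.one_mul, Matrix.mul_one, smul_smul,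
      smul_sub]
    module
  have hTu : T.mulVec u = 0 := by
    simp [hT, Matrix.sub_mulVec, h, Matrix.smul_mulVec, Matrix.one_mulVec]
  have key : hermInner (Tᴴ.mulVec u) (Tᴴ.mulVec u) = 0 := by
    rw [hermInner_mulVec_right Tᴴ, Matrix.conjTranspose_conjTranspose,
      Matrix.mulVec_mulVec, hTn, ← Matrix.mulVec_mulVec, hTu]
    simp [hermInner, Matrix.mulVec_zero]
  have hz := hermInner_self_eq_zero key
  have h2 : Hᴴ.mulVec u - star α • u = Tᴴ.mulVec u := by
    simp [hT, Matrix.conjTranspose_sub, Matrix.sub_mulVec, Matrix.conjTranspose_smul,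
      Matrix.smul_mulVec, Matrix.one_mulVec]
  rw [hz] at h2
  linear_combination (norm := module) h2

lemma normal_orth [DecidableEq n] {H : Matrix n n ℂ} (hn : H * Hᴴ = Hᴴ * H)
    {α β : ℂ} {u w : n → ℂ} (hu : H.mulVec u = α • u) (hw : H.mulVec w = β • w)
    (hab : α ≠ β) : hermInner u w = 0 := by
  have h1 : hermInner u (H.mulVec w) = β * hermInner u w := by
    rw [hw, hermInner_smul_right]
  have h2 : hermInner u (H.mulVec w) = α * hermInner u w := by
    rw [hermInner_mulVec_right, normal_conjT_eig hn hu, hermInner_smul_left]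
    simp
  have h3 : (α - β) * hermInner u w = 0 := by rw [sub_mul, ← h1, ← h2, sub_self]
  rcases mul_eq_zero.mp h3 with h | h
  · exact absurd (sub_eq_zero.mp h) hab
  · exact h

lemma sum_dite_subtype {X : Type*} [Fintype X] {p : X → Prop} [DecidablePred p]
    (f : Subtype p → ℂ) :
    ∑ x : X, (if h : p x then f ⟨x, h⟩ else 0) = ∑ x : Subtype p, f x := by
  rw [Finset.sum_dite]
  simp only [Finset.sum_const_zero, add_zero]
  exact Fintype.sum_equiv (Equiv.subtypeEquivRight (fun x => by simp)) _ _ (fun x => rfl)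


lemma block_diag {X : Type*} [Fintype X] [DecidableEq X] {κ : Type*}
    {A : Matrix X X ℂ} (hA : A.IsHermitian) (c : X → κ)
    (hblock : ∀ a b, c a ≠ c b → A a b = 0) :
    ∃ (w : X → X → ℂ) (t : X → ℝ),
      (∀ a b, hermInner (w a) (w b) = if a = b then 1 else 0) ∧
      (∀ a, A.mulVec (w a) = (t a : ℂ) • w a) ∧
      (∀ a b, c b ≠ c a → w a b = 0) := by
  classical
  set S : κ → Type _ := fun o => {x // c x = o} with hS
  have hsub : ∀ o : κ, (A.submatrix (Subtype.val : S o → X) Subtype.val).IsHermitian :=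
    fun o => hA.submatrix _
  set B : ∀ o : κ, OrthonormalBasis (S o) ℂ (EuclideanSpace ℂ (S o)) :=
    fun o => (hsub o).eigenvectorBasis with hB
  set w : X → X → ℂ := fun a x => if h : c x = c a then B (c a) ⟨a, rfl⟩ ⟨x, h⟩ else 0 with hw
  set t : X → ℝ := fun a => (hsub (c a)).eigenvalues ⟨a, rfl⟩ with ht
  have wdef : ∀ (a : X) (o : κ) (ha : c a = o),
      w a = fun x => if h : c x = o then B o ⟨a, ha⟩ ⟨x, h⟩ else 0 := by
    intro a o ha
    subst ha
    rfl
  have tdef : ∀ (a : X) (o : κ) (ha : c a = o), t a = (hsub o).eigenvalues ⟨a, ha⟩ := by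
    intro a o ha
    subst ha
    rfl
  have wapp : ∀ (a x : X), w a x = if h : c x = c a then B (c a) ⟨a, rfl⟩ ⟨x, h⟩ else 0 :=
    fun a x => rfl
  refine ⟨w, t, ?_, ?_, ?_⟩
  · -- orthonormality
    intro a b
    by_cases hab : c a = c b
    · -- same block
      set o := c b with ho
      rw [wdef a o hab, wdef b o rfl]
      unfold hermInner
      have step1 : ∀ x : X,
          star (if h : c x = o then B o ⟨a, hab⟩ ⟨x, h⟩ else 0) *
            (if h : c x = o then B o ⟨b, rfl⟩ ⟨x, h⟩ else 0)
          = if h : c x = o then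
              star ((B o ⟨a, hab⟩) ⟨x, h⟩) * (B o ⟨b, rfl⟩ ⟨x, h⟩) else 0 := by
        intro x
        by_cases h : c x = o
        · rw [dif_pos h, dif_pos h, dif_pos h]
        · rw [dif_neg h, dif_neg h, dif_neg h, star_zero, zero_mul]
      rw [Finset.sum_congr rfl (fun x _ => step1 x),
        sum_dite_subtype (p := fun x => c x = o)
          (fun z => star ((B o ⟨a, hab⟩) z) * (B o ⟨b, rfl⟩ z))]
      have horth := orthonormal_iff_ite.mp (B o).orthonormal ⟨a, hab⟩ ⟨b, rfl⟩
      rw [PiLp.inner_apply] at horth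
      simp only [RCLike.inner_apply] at horth
      rw [show (∑ x : S o, star ((B o ⟨a, hab⟩) x) * (B o ⟨b, rfl⟩ x))
          = ∑ x : S o,
            (starRingEnd ℂ) ((B o ⟨a, hab⟩) x) * (B o ⟨b, rfl⟩ x) from rfl]
      simp only [mul_comm] at horth ⊢
      rw [horth]
      by_cases h : a = b
      · subst h
        rw [if_pos rfl, if_pos rfl]
      · rw [if_neg h, if_neg (fun hc => h (congrArg Subtype.val hc))]
    · -- different blocks
      rw [if_neg (fun h => hab (by rw [h]))]
      unfold hermInner
      apply Finset.sum_eq_zero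
      intro x _
      rw [wapp a x, wapp b x]
      by_cases h : c x = c a
      · rw [dif_neg (fun hc : c x = c b => hab (h.symm.trans hc)), mul_zero]
      · rw [dif_neg h, star_zero, zero_mul]
  · -- eigenvector equation
    intro a
    funext x
    rw [Matrix.mulVec, dotProduct]
    have step1 : ∀ y : X, A x y * w a y
        = if h : c y = c a then A x y * B (c a) ⟨a, rfl⟩ ⟨y, h⟩ else 0 := by
      intro y
      rw [wapp a y]
      by_cases h : c y = c a
      · rw [dif_pos h, dif_pos h]
      · rw [dif_neg h, dif_neg h, mul_zero]
    rw [Finset.sum_congr rfl (fun y _ => step1 y),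
      sum_dite_subtype (p := fun y => c y = c a)
        (fun z => A x ↑z * (B (c a) ⟨a, rfl⟩ z))]
    by_cases hx : c x = c a
    · have heig := (hsub (c a)).mulVec_eigenvectorBasis ⟨a, rfl⟩
      have := congrFun heig ⟨x, hx⟩
      rw [Matrix.mulVec, dotProduct] at this
      have this2 : (∑ y : S (c a), A x ↑y * (B (c a)) ⟨a, rfl⟩ y)
          = (hsub (c a)).eigenvalues ⟨a, rfl⟩ • ((B (c a)) ⟨a, rfl⟩ ⟨x, hx⟩) := this
      rw [this2, Pi.smul_apply, wapp a x, dif_pos hx, tdef a (c a) rfl,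
        Complex.real_smul, smul_eq_mul]
    · rw [Finset.sum_eq_zero (fun y _ => by
        rw [hblock x ↑y (by rw [y.2]; exact hx), zero_mul])]
      rw [Pi.smul_apply, wapp a x, dif_neg hx, smul_zero]
  · intro a b h
    exact dif_neg h

end myaux

theorem stmt_9 {X : Type*} [Fintype X] [DecidableEq X]
    (K : Set X) [DecidablePred (· ∈ K)]
    (M : Matrix X X ℂ) (hMherm : Mᴴ = M)
    (H : Matrix K K ℂ) (hHnormal : H * Hᴴ = Hᴴ * H)
    (hcosp : IsHCospectral K M H) (Q : ℝ) :
    IsHCospectral K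
      (M + (Q : ℂ) • Matrix.diagonal (fun x => if x ∈ K then (1 : ℂ) else 0)) H := by
  classical
  obtain ⟨ψ, horth, heig, hres⟩ := hcosp
  choose μ hμ using heig
  have hres' : ∀ a, restr K (ψ a) ≠ 0 →
      ∃ ν : ℂ, H.mulVec (restr K (ψ a)) = ν • restr K (ψ a) := by
    intro a h
    rcases hres a with h0 | ⟨_, hv⟩
    · exact absurd h0 h
    · exact hv
  choose ν hν using hres'
  set c : X → Option ℂ :=
    fun a => if h : restr K (ψ a) = 0 then none else some (ν a h) with hc
  -- facts about c
  have hc_none : ∀ a, c a = none → restr K (ψ a) = 0 := by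
    intro a h
    by_contra h0
    rw [hc] at h
    simp only [dif_neg h0] at h
    exact Option.some_ne_none _ h
  have hc_some : ∀ a (lam : ℂ), c a = some lam →
      H.mulVec (restr K (ψ a)) = lam • restr K (ψ a) := by
    intro a lam h
    by_cases h0 : restr K (ψ a) = 0
    · rw [hc] at h; simp [dif_pos h0] at h
    · rw [hc] at h
      simp only [dif_neg h0, Option.some.injEq] at h
      rw [← h]
      exact hν a h0
  set D : Matrix X X ℂ := Matrix.diagonal (fun x => if x ∈ K then (1 : ℂ) else 0) with hD
  set N : Matrix X X ℂ := M + (Q : ℂ) • D with hNdef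
  have hDh : Dᴴ = D := by
    rw [hD, Matrix.diagonal_conjTranspose]
    have : star (fun x => if x ∈ K then (1:ℂ) else 0) = fun x => if x ∈ K then (1:ℂ) else 0 := by
      funext x
      by_cases h : x ∈ K <;> simp [h]
    rw [this]
  have hN : Nᴴ = N := by
    rw [hNdef, Matrix.conjTranspose_add, hMherm, Matrix.conjTranspose_smul, hDh]
    congr 1
    congr 1
    simp [Complex.star_def, Complex.conj_ofReal]
  set U : Matrix X X ℂ := Matrix.of (fun x a => ψ a x) with hU
  have hUU : Uᴴ * U = 1 := by
    ext a b
    rw [Matrix.mul_apply, Matrix.one_apply, ← horth a b]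
    rfl
  have hUU' : U * Uᴴ = 1 := mul_eq_one_comm.mp hUU
  set A : Matrix X X ℂ := Uᴴ * N * U with hA
  have hAherm : A.IsHermitian := by
    show Aᴴ = A
    rw [hA, Matrix.conjTranspose_mul, Matrix.conjTranspose_mul,
      Matrix.conjTranspose_conjTranspose, hN, Matrix.mul_assoc]
  have hAentry : ∀ a b, A a b = hermInner (ψ a) (N.mulVec (ψ b)) := by
    intro a b
    rw [hA, Matrix.mul_assoc, Matrix.mul_apply, hermInner]
    apply Finset.sum_congr rfl
    intro x _
    rw [Matrix.mul_apply]
    rfl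
  -- D action
  have hDval : ∀ b, D.mulVec (ψ b) = fun x => (if x ∈ K then (1:ℂ) else 0) * ψ b x := by
    intro b
    funext x
    rw [hD, Matrix.mulVec_diagonal]
  have hDinner : ∀ a b, hermInner (ψ a) (D.mulVec (ψ b))
      = hermInner (restr K (ψ a)) (restr K (ψ b)) := by
    intro a b
    rw [hDval b, hermInner]
    have step : ∀ x : X, star (ψ a x) * ((if x ∈ K then (1:ℂ) else 0) * ψ b x)
        = if h : x ∈ K then star (restr K (ψ a) ⟨x, h⟩) * (restr K (ψ b) ⟨x, h⟩) else 0 := by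
      intro x
      by_cases h : x ∈ K
      · rw [dif_pos h, if_pos h, one_mul]
        rfl
      · rw [dif_neg h, if_neg h, zero_mul, mul_zero]
    rw [Finset.sum_congr rfl (fun x _ => step x),
      sum_dite_subtype (p := fun x => x ∈ K)
        (fun z => star (restr K (ψ a) z) * (restr K (ψ b) z))]
    rfl
  have hAblock : ∀ a b, c a ≠ c b → A a b = 0 := by
    intro a b hab
    have hne : a ≠ b := fun h => hab (by rw [h])
    rw [hAentry a b, hNdef, Matrix.add_mulVec, Matrix.smul_mulVec,
      hermInner_add_right, hμ b, hermInner_smul_right, hermInner_smul_right,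
      horth a b, if_neg hne, mul_zero, zero_add, hDinner a b]
    by_cases ha0 : restr K (ψ a) = 0
    · rw [ha0]
      simp [hermInner]
    by_cases hb0 : restr K (ψ b) = 0
    · rw [hb0]
      simp [hermInner]
    have hnu : ν a ha0 ≠ ν b hb0 := by
      intro h
      apply hab
      rw [hc]
      simp only [dif_neg ha0, dif_neg hb0, h]
    rw [normal_orth hHnormal (hν a ha0) (hν b hb0) hnu, mul_zero]
  obtain ⟨w, t, hworth, hweig, hwsupp⟩ := block_diag hAherm c hAblock
  set φ : X → X → ℂ := fun a => U.mulVec (w a) with hφ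
  have hkeep : ∀ v u : X → ℂ, hermInner (U.mulVec v) (U.mulVec u) = hermInner v u := by
    intro v u
    rw [hermInner_eq, hermInner_eq, Matrix.star_mulVec, ← Matrix.dotProduct_mulVec,
      Matrix.mulVec_mulVec, hUU, Matrix.one_mulVec]
  have hNU : N * U = U * A := by
    rw [hA, ← Matrix.mul_assoc, ← Matrix.mul_assoc, hUU', Matrix.one_mul]
  have hrestr : ∀ a (k : K), restr K (φ a) k = ∑ b, w a b * ψ b ↑k := by
    intro a k
    show (U.mulVec (w a)) ↑k = _
    rw [Matrix.mulVec, dotProduct]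
    apply Finset.sum_congr rfl
    intro b _
    rw [mul_comm]
    rfl
  refine ⟨φ, ?_, ?_, ?_⟩
  · intro a b
    rw [hφ]
    rw [hkeep, hworth]
  · intro a
    refine ⟨(t a : ℂ), ?_⟩
    rw [hφ]
    rw [Matrix.mulVec_mulVec, hNU, ← Matrix.mulVec_mulVec, hweig a, Matrix.mulVec_smul]
  · intro a
    rcases hco : c a with _ | lam
    · -- c a = none : restriction is zero
      left
      funext k
      rw [hrestr a k]
      apply Finset.sum_eq_zero
      intro b _
      by_cases hb : c b = c a
      · have hb0 : restr K (ψ b) = 0 := hc_none b (by rw [hb, hco])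
        have : ψ b ↑k = 0 := congrFun hb0 k
        rw [this, mul_zero]
      · rw [hwsupp a b hb, zero_mul]
    · -- c a = some lam
      have heigH : H.mulVec (restr K (φ a)) = lam • restr K (φ a) := by
        funext k
        rw [Matrix.mulVec, dotProduct]
        have e1 : ∀ k' : K, H k k' * restr K (φ a) k'
            = ∑ b, H k k' * (w a b * ψ b ↑k') := by
          intro k'
          rw [hrestr a k', Finset.mul_sum]
        rw [Finset.sum_congr rfl (fun k' _ => e1 k'), Finset.sum_comm]
        have e2 : ∀ b, (∑ k' : K, H k k' * (w a b * ψ b ↑k'))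
            = w a b * (H.mulVec (restr K (ψ b)) k) := by
          intro b
          rw [Matrix.mulVec, dotProduct, Finset.mul_sum]
          apply Finset.sum_congr rfl
          intro k' _
          show H k k' * (w a b * ψ b ↑k') = w a b * (H k k' * restr K (ψ b) k')
          rw [restr]
          ring
        rw [Finset.sum_congr rfl (fun b _ => e2 b)]
        have e3 : ∀ b, w a b * (H.mulVec (restr K (ψ b)) k)
            = lam * (w a b * ψ b ↑k) := by
          intro b
          by_cases hb : c b = c a
          · have := hc_some b lam (by rw [hb, hco])
            have h4 := congrFun this k
            rw [h4]
            show w a b * (lam * restr K (ψ b) k) = _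
            rw [restr]
            ring
          · rw [hwsupp a b hb, zero_mul, zero_mul, mul_zero]
        rw [Finset.sum_congr rfl (fun b _ => e3 b), ← Finset.mul_sum]
        show _ = lam • restr K (φ a) k
        rw [hrestr a k, smul_eq_mul]
      by_cases hz : restr K (φ a) = 0
      · left; exact hz
      · right
        exact ⟨hz, lam, heigH⟩
end

section
/- Let k ≥ 1 and m be integers, and let M be the (2k+2)×(2k+2) adjacency matrix of the graph S_{k,m}: vertices 0, 1, …, 2k+1, with M_{i,i+1} = M_{i+1,i} = 1 for 0 ≤ i ≤ 2k, M_{k,k} = m, and all other entries 0. Let u = 0 and v = 2k+1. Then for all integers j ≥ 0: (M^j)_{u,u} − (M^j)_{v,v} = m·(M^j)_{u,v}. -/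
open Matrix

/-- The reflection `i ↦ 2k+1-i` on `Fin (2k+2)`. -/
def sref (k : ℕ) (i : Fin (2 * k + 2)) : Fin (2 * k + 2) :=
  ⟨2 * k + 1 - (i : ℕ), by omega⟩

/-- The matrix `P - m Λ`, where `P` is the reflection permutation matrix and `Λ` the
diagonal indicator of `{k+1, …, 2k+1}`. It commutes with the adjacency matrix of `S_{k,m}`. -/
def Zmat (k : ℕ) (m : ℤ) : Matrix (Fin (2 * k + 2)) (Fin (2 * k + 2)) ℝ :=
  fun i j => (if (i : ℕ) + (j : ℕ) = 2 * k + 1 then 1 else 0) -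
    (if (i : ℕ) = (j : ℕ) ∧ k + 1 ≤ (i : ℕ) then (m : ℝ) else 0)

lemma Zmat_apply (k : ℕ) (m : ℤ) (l j : Fin (2 * k + 2)) :
    Zmat k m l j = (if l = sref k j then (1 : ℝ) else 0) -
      (if l = j then (if k + 1 ≤ (j : ℕ) then (m : ℝ) else 0) else 0) := by
  have hl := l.isLt
  have hj := j.isLt
  have h1 : ((l : ℕ) + (j : ℕ) = 2 * k + 1) ↔ l = sref k j := by
    rw [Fin.ext_iff]
    show _ ↔ (l : ℕ) = 2 * k + 1 - (j : ℕ)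
    omega
  have h2 : (if ((l : ℕ) = (j : ℕ) ∧ k + 1 ≤ (l : ℕ)) then (m : ℝ) else 0) =
      (if l = j then (if k + 1 ≤ (j : ℕ) then (m : ℝ) else 0) else 0) := by
    by_cases hlj : l = j
    · subst hlj; simp
    · have : ¬ ((l : ℕ) = (j : ℕ)) := fun h => hlj (Fin.ext h)
      simp [hlj, this]
  show (if (l : ℕ) + (j : ℕ) = 2 * k + 1 then (1:ℝ) else 0) - _ = _
  rw [if_congr h1 rfl rfl, h2]

lemma mul_Zmat (k : ℕ) (m : ℤ) (A : Matrix (Fin (2 * k + 2)) (Fin (2 * k + 2)) ℝ)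
    (i j : Fin (2 * k + 2)) :
    (A * Zmat k m) i j = A i (sref k j) -
      (if k + 1 ≤ (j : ℕ) then (m : ℝ) else 0) * A i j := by
  rw [Matrix.mul_apply]
  have h : ∀ l : Fin (2 * k + 2), A i l * Zmat k m l j =
      (if l = sref k j then A i l else 0) -
      (if l = j then (if k + 1 ≤ (j : ℕ) then (m : ℝ) else 0) * A i l else 0) := by
    intro l
    rw [Zmat_apply, mul_sub, mul_ite, mul_one, mul_zero, mul_ite, mul_zero]
    ring_nf
  rw [Finset.sum_congr rfl (fun l _ => h l), Finset.sum_sub_distrib,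
    Finset.sum_ite_eq' Finset.univ (sref k j) (fun l => A i l),
    Finset.sum_ite_eq' Finset.univ j
      (fun l => (if k + 1 ≤ (j : ℕ) then (m : ℝ) else 0) * A i l)]
  simp

lemma Zmat_mul (k : ℕ) (m : ℤ) (A : Matrix (Fin (2 * k + 2)) (Fin (2 * k + 2)) ℝ)
    (i j : Fin (2 * k + 2)) :
    (Zmat k m * A) i j = A (sref k i) j -
      (if k + 1 ≤ (i : ℕ) then (m : ℝ) else 0) * A i j := by
  rw [Matrix.mul_apply]
  have h : ∀ l : Fin (2 * k + 2), Zmat k m i l * A l j =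
      (if l = sref k i then A l j else 0) -
      (if l = i then (if k + 1 ≤ (i : ℕ) then (m : ℝ) else 0) * A l j else 0) := by
    intro l
    have hl := l.isLt
    have hi := i.isLt
    have h1 : ((i : ℕ) + (l : ℕ) = 2 * k + 1) ↔ l = sref k i := by
      rw [Fin.ext_iff]
      show _ ↔ (l : ℕ) = 2 * k + 1 - (i : ℕ)
      omega
    have h2 : (if ((i : ℕ) = (l : ℕ) ∧ k + 1 ≤ (i : ℕ)) then (m : ℝ) else 0) =
        (if l = i then (if k + 1 ≤ (i : ℕ) then (m : ℝ) else 0) else 0) := by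
      by_cases hli : l = i
      · subst hli; simp
      · have : ¬ ((i : ℕ) = (l : ℕ)) := fun h => hli (Fin.ext h.symm)
        simp [hli, this]
    show ((if (i : ℕ) + (l : ℕ) = 2 * k + 1 then (1:ℝ) else 0) - _) * A l j = _
    rw [if_congr h1 rfl rfl, h2, sub_mul, ite_mul, one_mul, zero_mul, ite_mul, zero_mul]
  rw [Finset.sum_congr rfl (fun l _ => h l), Finset.sum_sub_distrib,
    Finset.sum_ite_eq' Finset.univ (sref k i) (fun l => A l j),
    Finset.sum_ite_eq' Finset.univ i
      (fun l => (if k + 1 ≤ (i : ℕ) then (m : ℝ) else 0) * A l j)]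
  simp

set_option maxHeartbeats 2000000 in
theorem stmt_12 (k : ℕ) (hk : 1 ≤ k) (m : ℤ)
    (M : Matrix (Fin (2 * k + 2)) (Fin (2 * k + 2)) ℝ)
    -- `M` is the adjacency matrix of `S_{k,m}`: a path on vertices `0,…,2k+1`
    -- with a loop of weight `m` at vertex `k`
    (hM : ∀ i j : Fin (2 * k + 2), M i j =
      (if (i : ℕ) + 1 = (j : ℕ) ∨ (j : ℕ) + 1 = (i : ℕ) then 1 else 0) +
      (if (i : ℕ) = k ∧ (j : ℕ) = k then (m : ℝ) else 0))
    (u v : Fin (2 * k + 2)) (hu : (u : ℕ) = 0) (hv : (v : ℕ) = 2 * k + 1) :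
    ∀ j : ℕ, (M ^ j) u u - (M ^ j) v v = (m : ℝ) * (M ^ j) u v := by
  have hcomm : M * Zmat k m = Zmat k m * M := by
    ext i j
    rw [mul_Zmat, Zmat_mul]
    have hi := i.isLt
    have hj := j.isLt
    have hrj : ((sref k j : Fin (2 * k + 2)) : ℕ) = 2 * k + 1 - (j : ℕ) := rfl
    have hri : ((sref k i : Fin (2 * k + 2)) : ℕ) = 2 * k + 1 - (i : ℕ) := rfl
    rw [hM i (sref k j), hM (sref k i) j, hM i j, hrj, hri]
    split_ifs <;> first | (exfalso; omega) | ring_nf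
  have hcommj : ∀ j : ℕ, M ^ j * Zmat k m = Zmat k m * M ^ j := by
    intro j
    induction j with
    | zero => simp
    | succ n ih =>
      rw [pow_succ, mul_assoc, hcomm, ← mul_assoc, ih, mul_assoc]
  intro j
  have key : (M ^ j * Zmat k m) u v = (Zmat k m * M ^ j) u v := by rw [hcommj j]
  rw [mul_Zmat, Zmat_mul] at key
  have hsv : sref k v = u := by
    apply Fin.ext
    show 2 * k + 1 - (v : ℕ) = (u : ℕ)
    omega
  have hsu : sref k u = v := by
    apply Fin.ext
    show 2 * k + 1 - (u : ℕ) = (v : ℕ)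
    omega
  rw [hsv, hsu] at key
  have h1 : (k + 1 ≤ (v : ℕ)) := by omega
  have h2 : ¬ (k + 1 ≤ (u : ℕ)) := by omega
  rw [if_pos h1, if_neg h2] at key
  linarith
end

section
/- Let M be an n×n real symmetric matrix and let N be an n×n real symmetric idempotent (projection) matrix. Suppose θ ∈ ℝ is an eigenvalue of M + Q·N with multiplicity at least k for every Q ∈ ℝ. Then there exist k orthonormal vectors w_1, …, w_k with N w_i = 0 and M w_i = θ w_i for all i = 1, …, k. -/
open Matrix

theorem stmt_19 {n : ℕ} (M N : Matrix (Fin n) (Fin n) ℝ)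
    (hM : M.IsSymm) (hN : N.IsSymm) (hNidem : N * N = N)
    (θ : ℝ) (k : ℕ)
    -- `θ` is an eigenvalue of `M + Q·N` with multiplicity at least `k` for every `Q`
    (hmult : ∀ Q : ℝ,
      k ≤ Module.finrank ℝ (LinearMap.ker (M + Q • N - θ • (1 : Matrix (Fin n) (Fin n) ℝ)).mulVecLin)) :
    ∃ w : Fin k → (Fin n → ℝ),
      (∀ i j, (∑ x, w i x * w j x) = if i = j then 1 else 0) ∧
      (∀ i, N.mulVec (w i) = 0) ∧
      (∀ i, M.mulVec (w i) = θ • w i) := by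
  classical
  have hker : ∀ (Q : ℝ) (v : Fin n → ℝ),
      v ∈ LinearMap.ker (M + Q • N - θ • (1 : Matrix (Fin n) (Fin n) ℝ)).mulVecLin ↔
      M.mulVec v + Q • N.mulVec v - θ • v = 0 := by
    intro Q v
    simp [LinearMap.mem_ker, mulVecLin_apply, sub_mulVec, add_mulVec, smul_mulVec,
      one_mulVec]
  -- symmetry of dot products
  have hsym : ∀ (S : Matrix (Fin n) (Fin n) ℝ), S.IsSymm → ∀ v w : Fin n → ℝ,
      v ⬝ᵥ S.mulVec w = S.mulVec v ⬝ᵥ w := by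
    intro S hS v w
    rw [Matrix.dotProduct_mulVec, ← Matrix.mulVec_transpose, hS.eq]
  -- key orthogonality
  have key : ∀ (Q Q' : ℝ) (v w : Fin n → ℝ), Q ≠ Q' →
      M.mulVec v + Q • N.mulVec v - θ • v = 0 →
      M.mulVec w + Q' • N.mulVec w - θ • w = 0 →
      N.mulVec v ⬝ᵥ N.mulVec w = 0 := by
    intro Q Q' v w hQQ hv hw
    have h1 : v ⬝ᵥ (M.mulVec w + Q' • N.mulVec w - θ • w) = 0 := by rw [hw]; simp
    have h2 : (M.mulVec v + Q • N.mulVec v - θ • v) ⬝ᵥ w = 0 := by rw [hv]; simp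
    have e1 : v ⬝ᵥ M.mulVec w + Q' * (v ⬝ᵥ N.mulVec w) - θ * (v ⬝ᵥ w) = 0 := by
      simpa [dotProduct_add, dotProduct_sub, dotProduct_smul, smul_eq_mul] using h1
    have e2 : M.mulVec v ⬝ᵥ w + Q * (N.mulVec v ⬝ᵥ w) - θ * (v ⬝ᵥ w) = 0 := by
      simpa [add_dotProduct, sub_dotProduct, smul_dotProduct, smul_eq_mul,
        hsym 1 Matrix.isSymm_one] using h2
    have hnw := hsym N hN v w
    have hmw := hsym M hM v w
    have e3 : (Q' - Q) * (v ⬝ᵥ N.mulVec w) = 0 := by linear_combination e1 - e2 - hmw - Q * hnw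
    have e4 : v ⬝ᵥ N.mulVec w = 0 := by
      rcases mul_eq_zero.1 e3 with h | h
      · exact absurd (sub_eq_zero.1 h).symm hQQ
      · exact h
    calc N.mulVec v ⬝ᵥ N.mulVec w = v ⬝ᵥ N.mulVec (N.mulVec w) := (hsym N hN _ _).symm
      _ = v ⬝ᵥ N.mulVec w := by rw [Matrix.mulVec_mulVec, hNidem]
      _ = 0 := e4
  -- there is a Q with N vanishing on the kernel
  have hexQ : ∃ Q : ℝ, ∀ v ∈ LinearMap.ker
      (M + Q • N - θ • (1 : Matrix (Fin n) (Fin n) ℝ)).mulVecLin, N.mulVec v = 0 := by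
    by_contra hc
    push_neg at hc
    choose v hv hv0 using hc
    set u : Fin (n + 1) → EuclideanSpace ℝ (Fin n) :=
      fun i => (WithLp.equiv 2 (Fin n → ℝ)).symm (N.mulVec (v ((i : ℕ) : ℝ))) with hu
    have hli : LinearIndependent ℝ u := by
      apply linearIndependent_of_ne_zero_of_inner_eq_zero
      · intro i hi
        apply hv0 ((i : ℕ) : ℝ)
        have : N.mulVec (v ((i : ℕ) : ℝ)) = (WithLp.equiv 2 (Fin n → ℝ)) (u i) := by
          simp [hu]
        rw [this, hi]
        simp
      · intro i j hij
        have hQne : ((i : ℕ) : ℝ) ≠ ((j : ℕ) : ℝ) := by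
          exact_mod_cast fun h => hij (Fin.val_injective (by exact_mod_cast h))
        have := key _ _ _ _ hQne.symm ((hker _ _).1 (hv _)) ((hker _ _).1 (hv _))
        simpa [hu, PiLp.inner_apply, RCLike.inner_apply, dotProduct] using this
    have hcard := hli.fintype_card_le_finrank
    rw [finrank_euclideanSpace] at hcard
    simp at hcard
  obtain ⟨Q, hQ⟩ := hexQ
  -- the kernel sits inside V
  set V : Submodule ℝ (Fin n → ℝ) :=
    LinearMap.ker N.mulVecLin ⊓ LinearMap.ker (M - θ • (1 : Matrix (Fin n) (Fin n) ℝ)).mulVecLin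
    with hV
  have hle : LinearMap.ker (M + Q • N - θ • (1 : Matrix (Fin n) (Fin n) ℝ)).mulVecLin ≤ V := by
    intro x hx
    have hNx : N.mulVec x = 0 := hQ x hx
    have hx' := (hker Q x).1 hx
    rw [hNx, smul_zero, add_zero] at hx'
    constructor
    · simpa [LinearMap.mem_ker, mulVecLin_apply] using hNx
    · simpa [LinearMap.mem_ker, mulVecLin_apply, sub_mulVec, smul_mulVec, one_mulVec,
        sub_eq_zero] using hx'
  have hkV : k ≤ Module.finrank ℝ V := le_trans (hmult Q) (Submodule.finrank_mono hle)
  -- move to EuclideanSpace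
  set e : (Fin n → ℝ) ≃ₗ[ℝ] EuclideanSpace ℝ (Fin n) :=
    (WithLp.linearEquiv 2 ℝ (Fin n → ℝ)).symm with he
  set V' : Submodule ℝ (EuclideanSpace ℝ (Fin n)) := V.map (e : (Fin n → ℝ) →ₗ[ℝ] EuclideanSpace ℝ (Fin n)) with hV'
  have hkV' : k ≤ Module.finrank ℝ V' := hkV.trans_eq (LinearEquiv.finrank_map_eq e V).symm
  set b := stdOrthonormalBasis ℝ V' with hb
  have hmemw : ∀ i : Fin k, (WithLp.equiv 2 (Fin n → ℝ))
      ((b (Fin.castLE hkV' i) : EuclideanSpace ℝ (Fin n))) ∈ V := by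
    intro i
    have hm : ((b (Fin.castLE hkV' i) : EuclideanSpace ℝ (Fin n))) ∈ V.map (e : (Fin n → ℝ) →ₗ[ℝ] EuclideanSpace ℝ (Fin n)) :=
      (b (Fin.castLE hkV' i)).2
    obtain ⟨x, hxV, hex⟩ := Submodule.mem_map.mp hm
    have hwx : (WithLp.equiv 2 (Fin n → ℝ))
        ((b (Fin.castLE hkV' i) : EuclideanSpace ℝ (Fin n))) = x := by
      rw [← hex]
      simp [he]
    rwa [hwx]
  refine ⟨fun i => (WithLp.equiv 2 (Fin n → ℝ)) ((b (Fin.castLE hkV' i) : EuclideanSpace ℝ (Fin n))), ?_, ?_, ?_⟩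
  · intro i j
    have h := orthonormal_iff_ite.mp b.orthonormal (Fin.castLE hkV' i) (Fin.castLE hkV' j)
    rw [Submodule.coe_inner] at h
    simp only [PiLp.inner_apply, RCLike.inner_apply, conj_trivial] at h
    simp only [Fin.castLE_inj] at h
    rw [← h]
    exact Finset.sum_congr rfl fun x _ => mul_comm _ _
  · intro i
    have h := (hmemw i).1
    simpa [LinearMap.mem_ker, mulVecLin_apply] using h
  · intro i
    have h := (hmemw i).2
    simp only [SetLike.mem_coe, LinearMap.mem_ker, mulVecLin_apply, sub_mulVec,
      smul_mulVec, one_mulVec, sub_eq_zero] at h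
    simpa using h
end
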